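/- For every real ρ > 0 and every real x, ∫_{ℝ} sech(t)^ρ · e^{i t x} dt = 2^{ρ−1} · B((ρ+ix)/2, (ρ−ix)/2), where B(z,w) = Γ(z)Γ(w)/Γ(z+w) is the complex Beta function. -/

import Mathlib

open MeasureTheory Complex Set

/-- The hyperbolic secant function: `sech t = 2 / (eᵗ + e⁻ᵗ)`. -/
noncomputable def sech (x : ℝ) : ℝ := 1 / Real.cosh x

noncomputable def σf (t : ℝ) : ℝ := Real.exp (2*t) / (1 + Real.exp (2*t))

lemma hden (t : ℝ) : 0 < 1 + Real.exp (2*t) := by positivity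

lemma σf_mem (t : ℝ) : σf t ∈ Ioo (0:ℝ) 1 := by
  constructor
  · rw [σf]; exact div_pos (Real.exp_pos _) (hden t)
  · rw [σf, div_lt_one (hden t)]; linarith [Real.exp_pos (2*t)]

lemma one_sub_σf (t : ℝ) : 1 - σf t = 1 / (1 + Real.exp (2*t)) := by
  field_simp [σf, (hden t).ne']
  rw [σf]
  field_simp [(hden t).ne']
  ring

lemma σf_deriv (t : ℝ) : HasDerivAt σf (2 * Real.exp (2*t) / (1 + Real.exp (2*t))^2) t := by
  have h1 : HasDerivAt (fun t : ℝ => Real.exp (2*t)) (Real.exp (2*t) * 2) t :=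
    ((hasDerivAt_id t).const_mul 2).exp.congr_deriv (by simp [mul_comm])
  have h2 : HasDerivAt (fun t : ℝ => 1 + Real.exp (2*t)) (Real.exp (2*t) * 2) t :=
    (h1.const_add 1)
  have := h1.div h2 (hden t).ne'
  exact this.congr_deriv (by ring)

lemma σf_inj : Function.Injective σf := by
  intro s t h
  unfold σf at h
  have hs := (hden s).ne'
  have ht := (hden t).ne'
  field_simp at h
  have : Real.exp (2*s) = Real.exp (2*t) := by nlinarith [Real.exp_pos (2*s), Real.exp_pos (2*t)]
  have := Real.exp_injective this
  linarith

lemma σf_surj : range σf = Ioo (0:ℝ) 1 := by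
  ext s
  constructor
  · rintro ⟨t, rfl⟩; exact σf_mem t
  · rintro ⟨h0, h1⟩
    refine ⟨Real.log (s / (1-s)) / 2, ?_⟩
    have h1' : 0 < 1 - s := by linarith
    have : Real.exp (2 * (Real.log (s / (1-s)) / 2)) = s / (1-s) := by
      rw [show 2 * (Real.log (s / (1-s)) / 2) = Real.log (s / (1-s)) by ring,
        Real.exp_log (div_pos h0 h1')]
    rw [σf, this]
    field_simp
    ring



lemma sech_eq (t : ℝ) : sech t = 2 * Real.exp t / (1 + Real.exp (2*t)) := by
  have hE : Real.exp (2*t) = Real.exp t * Real.exp t := by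
    rw [← Real.exp_add]; ring_nf
  rw [sech, Real.cosh_eq, hE]
  rw [Real.exp_neg]
  have h := Real.exp_pos t
  field_simp
  ring

lemma pointwise (ρ x t : ℝ) :
    ((sech t ^ ρ : ℝ) : ℂ) * Complex.exp (Complex.I * t * x) =
    (2:ℂ)^((ρ:ℂ)-1) * (|2 * Real.exp (2*t) / (1 + Real.exp (2*t))^2| •
      (((σf t : ℝ) : ℂ) ^ (((ρ:ℂ) + Complex.I*x)/2 - 1) *
        ((1:ℂ) - ((σf t : ℝ) : ℂ)) ^ (((ρ:ℂ) - Complex.I*x)/2 - 1))) := by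
  have hE := Real.exp_pos (2*t)
  have hd := hden t
  have hσ0 := (σf_mem t).1
  have hσ1 := (σf_mem t).2
  have h1σ : (0:ℝ) < 1 - σf t := by linarith
  have hsech : 0 < sech t := by rw [sech_eq]; positivity
  have hσ'pos : 0 < 2 * Real.exp (2*t) / (1 + Real.exp (2*t))^2 := by positivity
  set L := Real.log (1 + Real.exp (2*t)) with hL
  have hlogσ : Real.log (σf t) = 2*t - L := by
    rw [σf, Real.log_div (Real.exp_ne_zero _) hd.ne', Real.log_exp]
  have hlog1σ : Real.log (1 - σf t) = -L := by
    rw [one_sub_σf, Real.log_div one_ne_zero hd.ne', Real.log_one]; ring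
  have hlogsech : Real.log (sech t) = Real.log 2 + t - L := by
    rw [sech_eq, Real.log_div (by positivity) hd.ne',
      Real.log_mul two_ne_zero (Real.exp_ne_zero _), Real.log_exp]
  have hlogσ' : Real.log (2 * Real.exp (2*t) / (1 + Real.exp (2*t))^2)
      = Real.log 2 + 2*t - 2*L := by
    rw [Real.log_div (by positivity) (by positivity),
      Real.log_mul two_ne_zero (Real.exp_ne_zero _), Real.log_exp, Real.log_pow]
    push_cast
    ring
  have h2 : (2:ℂ)^((ρ:ℂ)-1) = Complex.exp (((Real.log 2 : ℝ):ℂ) * ((ρ:ℂ)-1)) := by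
    rw [Complex.cpow_def_of_ne_zero two_ne_zero,
      show (2:ℂ) = ((2:ℝ):ℂ) from by norm_num,
      ← Complex.ofReal_log (by norm_num : (0:ℝ) ≤ 2)]
  have hσ'c : ((2 * Real.exp (2*t) / (1 + Real.exp (2*t))^2 : ℝ) : ℂ)
      = Complex.exp (((Real.log 2 + 2*t - 2*L : ℝ)):ℂ) := by
    rw [← hlogσ', ← Complex.ofReal_exp, Real.exp_log hσ'pos]
  have c1 : (1:ℂ) - ((σf t : ℝ) : ℂ) = ((1 - σf t : ℝ) : ℂ) := by push_cast; ring
  rw [abs_of_pos hσ'pos, Complex.real_smul, h2, hσ'c,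
    Real.rpow_def_of_pos hsech, Complex.ofReal_exp, c1,
    Complex.cpow_def_of_ne_zero (by exact_mod_cast hσ0.ne'),
    Complex.cpow_def_of_ne_zero (by exact_mod_cast h1σ.ne'),
    ← Complex.ofReal_log hσ0.le, ← Complex.ofReal_log h1σ.le,
    hlogσ, hlog1σ, hlogsech,
    ← Complex.exp_add, ← Complex.exp_add, ← Complex.exp_add, ← Complex.exp_add]
  congr 1
  push_cast
  ring

/-- Bateman's Fourier transform formula: for `ρ > 0` and real `x`,
`∫ sech(t)^ρ e^{itx} dt = 2^{ρ-1} B((ρ+ix)/2, (ρ-ix)/2)`,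
where `B(z,w) = Γ(z)Γ(w)/Γ(z+w)` is the complex Beta function. -/
theorem sech_rpow_fourier (ρ x : ℝ) (hρ : 0 < ρ) :
    (∫ t : ℝ, ((sech t ^ ρ : ℝ) : ℂ) * Complex.exp (Complex.I * t * x)) =
      (2 : ℂ) ^ ((ρ : ℂ) - 1) *
        (Complex.Gamma ((ρ + Complex.I * x) / 2) * Complex.Gamma ((ρ - Complex.I * x) / 2) /
          Complex.Gamma (((ρ : ℂ) + Complex.I * x) / 2 + ((ρ : ℂ) - Complex.I * x) / 2)) := by
  have hre : ∀ y : ℝ, 0 < ((((ρ:ℂ)) + Complex.I * y) / 2).re := by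
    intro y
    have : ((ρ:ℂ) + Complex.I * y) / 2 = ((ρ/2 : ℝ) : ℂ) + ((y/2 : ℝ) : ℂ) * Complex.I := by
      push_cast; ring
    rw [this]
    simp [Complex.add_re]
    positivity
  have ha : 0 < ((((ρ:ℂ)) + Complex.I * x) / 2).re := hre x
  have hb : 0 < ((((ρ:ℂ)) - Complex.I * x) / 2).re := by
    have := hre (-x); push_cast at this ⊢
    convert this using 3
    ring
  have hab : ((ρ:ℂ) + Complex.I * x) / 2 + ((ρ:ℂ) - Complex.I * x) / 2 = (ρ:ℂ) := by ring
  rw [Complex.Gamma_mul_Gamma_eq_betaIntegral ha hb, hab,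
    mul_div_cancel_left₀ _ (Complex.Gamma_ne_zero_of_re_pos (by simpa using hρ)),
    Complex.betaIntegral, intervalIntegral.integral_of_le zero_le_one,
    MeasureTheory.integral_Ioc_eq_integral_Ioo, ← σf_surj, ← Set.image_univ,
    integral_image_eq_integral_abs_deriv_smul
      (f' := fun t => 2 * Real.exp (2*t) / (1 + Real.exp (2*t))^2)
      MeasurableSet.univ (fun t _ => (σf_deriv t).hasDerivWithinAt) σf_inj.injOn,
    MeasureTheory.setIntegral_univ, ← MeasureTheory.integral_const_mul]
  exact integral_congr_ae (Filter.Eventually.of_forall fun t => pointwise ρ x t)
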